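/- Let α ≥ 0 and β > 0. Suppose W : Q̄ ∖ {(0,0)} → ℝ is C⁴ and satisfies ∂_t W = α ∂_x² W − β ∂_x⁴ W on Q̄ ∖ {(0,0)}, with W(x,0) = 0 for all x > 0 and W(0,t) = ∂_x W(0,t) = 0 for all t > 0. Assume that for each t > 0, lim_{x→∞} W(x,t) = lim_{x→∞} ∂_x W(x,t) = 0 and sup_{x≥1} |∂_x² W(x,t)| < ∞, sup_{x≥1} |∂_x³ W(x,t)| < ∞; and that for every T > 0 there is a function B_T : (0,∞) → [0,∞) with ∫₀^∞ B_T(x) dx < ∞ such that |W(x,t)|², |∂_t W(x,t)|², |∂_x W(x,t)|², |∂_x² W(x,t)|², |∂_x³ W(x,t)|² ≤ B_T(x) for all x > 0 and 0 < t ≤ T. Then W ≡ 0. -/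

import Mathlib

open MeasureTheory Filter Complex Real Set Topology

noncomputable section

/-- The closed quarter-plane `Q̄ = [0,∞) × [0,∞)`. -/
def Qbar : Set (ℝ × ℝ) := {p : ℝ × ℝ | 0 ≤ p.1 ∧ 0 ≤ p.2}

/-- The `k`-th spatial derivative taken within `[0,∞)` (agreeing with the ordinary derivative at
interior points). -/
def DxW (W : ℝ → ℝ → ℝ) (k : ℕ) (x t : ℝ) : ℝ :=
  iteratedDerivWithin k (fun y => W y t) (Ici 0) x

/-- The time derivative taken within `[0,∞)`. -/
def DtW (W : ℝ → ℝ → ℝ) (x t : ℝ) : ℝ :=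
  derivWithin (fun s => W x s) (Ici 0) t

section aux
variable {W : ℝ → ℝ → ℝ}

lemma sliceX (hreg : ContDiffOn ℝ 4 (fun p : ℝ × ℝ => W p.1 p.2) (Qbar \ {(0, 0)}))
    {t : ℝ} (ht : 0 < t) : ContDiffOn ℝ 4 (fun x => W x t) (Ici 0) := by
  have h : ContDiff ℝ 4 (fun x : ℝ => (x, t)) := contDiff_id.prodMk contDiff_const
  have := hreg.comp h.contDiffOn (fun x hx => by
    simp only [Qbar, mem_diff, mem_setOf_eq, mem_singleton_iff, Prod.mk.injEq]
    exact ⟨⟨hx, ht.le⟩, fun h => absurd h.2 ht.ne'⟩)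
  exact this

lemma sliceT (hreg : ContDiffOn ℝ 4 (fun p : ℝ × ℝ => W p.1 p.2) (Qbar \ {(0, 0)}))
    {x : ℝ} (hx : 0 < x) : ContDiffOn ℝ 4 (fun s => W x s) (Ici 0) := by
  have h : ContDiff ℝ 4 (fun s : ℝ => (x, s)) := contDiff_const.prodMk contDiff_id
  exact hreg.comp h.contDiffOn (fun s hs => by
    simp only [Qbar, mem_diff, mem_setOf_eq, mem_singleton_iff, Prod.mk.injEq]
    exact ⟨⟨hx.le, hs⟩, fun h => absurd h.1 hx.ne'⟩)

lemma contDxW (hreg : ContDiffOn ℝ 4 (fun p : ℝ × ℝ => W p.1 p.2) (Qbar \ {(0, 0)}))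
    {t : ℝ} (ht : 0 < t) {k : ℕ} (hk : k ≤ 4) :
    ContinuousOn (fun x => DxW W k x t) (Ici 0) := by
  exact (sliceX hreg ht).continuousOn_iteratedDerivWithin (by exact_mod_cast hk) (uniqueDiffOn_Ici 0)

lemma hasDerivDxW (hreg : ContDiffOn ℝ 4 (fun p : ℝ × ℝ => W p.1 p.2) (Qbar \ {(0, 0)}))
    {t : ℝ} (ht : 0 < t) {k : ℕ} (hk : k < 4) {x : ℝ} (hx : 0 < x) :
    HasDerivAt (fun y => DxW W k y t) (DxW W (k + 1) x t) x := by
  have hd := (sliceX hreg ht).differentiableOn_iteratedDerivWithin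
    (by exact_mod_cast hk) (uniqueDiffOn_Ici 0)
  have h1 := (hd x (le_of_lt hx)).hasDerivWithinAt
  rw [← iteratedDerivWithin_succ] at h1
  exact h1.hasDerivAt (Ici_mem_nhds hx)

lemma hasDerivDtW (hreg : ContDiffOn ℝ 4 (fun p : ℝ × ℝ => W p.1 p.2) (Qbar \ {(0, 0)}))
    {x t : ℝ} (hx : 0 < x) (ht : 0 < t) :
    HasDerivAt (fun s => W x s) (DtW W x t) t := by
  have hd := ((sliceT hreg hx).differentiableOn (by norm_num)) t (le_of_lt ht)
  exact hd.hasDerivWithinAt.hasDerivAt (Ici_mem_nhds ht)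

lemma contDtW (hreg : ContDiffOn ℝ 4 (fun p : ℝ × ℝ => W p.1 p.2) (Qbar \ {(0, 0)}))
    {t : ℝ} (ht : 0 < t) :
    ContinuousOn (fun x => DtW W x t) (Ioi 0) := by
  have hU : IsOpen (Ioi (0:ℝ) ×ˢ Ioi (0:ℝ)) := isOpen_Ioi.prod isOpen_Ioi
  have hsub : (Ioi (0:ℝ) ×ˢ Ioi (0:ℝ)) ⊆ Qbar \ {(0, 0)} := by
    rintro ⟨a, b⟩ ⟨ha, hb⟩
    exact ⟨⟨le_of_lt ha, le_of_lt hb⟩, by simp [Prod.ext_iff]; intro h; exact absurd h (ne_of_gt ha)⟩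
  have hregU := hreg.mono hsub
  have hcf : ContinuousOn (fderiv ℝ (fun p : ℝ × ℝ => W p.1 p.2)) (Ioi 0 ×ˢ Ioi 0) :=
    hregU.continuousOn_fderiv_of_isOpen hU (by norm_num)
  have key : ∀ x ∈ Ioi (0:ℝ), DtW W x t =
      (fderiv ℝ (fun p : ℝ × ℝ => W p.1 p.2) (x, t)) (0, 1) := by
    intro x hx
    have hmem : (x, t) ∈ Ioi (0:ℝ) ×ˢ Ioi (0:ℝ) := ⟨hx, ht⟩
    have hda : DifferentiableAt ℝ (fun p : ℝ × ℝ => W p.1 p.2) (x, t) :=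
      (hregU.contDiffAt (hU.mem_nhds hmem)).differentiableAt (by norm_num)
    have hcurve : HasDerivAt (fun s : ℝ => ((x : ℝ), s)) ((0 : ℝ), (1 : ℝ)) t := by
      exact (hasDerivAt_const t x).prodMk (hasDerivAt_id t)
    have := hda.hasFDerivAt.comp_hasDerivAt t hcurve
    exact (hasDerivDtW hreg hx ht).unique this
  have : ContinuousOn (fun x => (fderiv ℝ (fun p : ℝ × ℝ => W p.1 p.2) (x, t)) (0, 1)) (Ioi 0) := by
    apply ContinuousOn.clm_apply _ continuousOn_const
    exact hcf.comp (continuous_id.prodMk continuous_const).continuousOn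
      (fun x hx => ⟨hx, ht⟩)
  exact this.congr key

end aux

lemma abs_mul_le_half (a b : ℝ) : |a * b| ≤ (a ^ 2 + b ^ 2) / 2 := by
  rw [abs_mul]
  nlinarith [sq_nonneg (|a| - |b|), _root_.sq_abs a, _root_.sq_abs b, abs_nonneg a, abs_nonneg b]

lemma integrable_of_le_B {B f : ℝ → ℝ} (hBint : IntegrableOn B (Ioi 0))
    (hmeas : AEStronglyMeasurable f (volume.restrict (Ioi 0))) (C : ℝ)
    (hle : ∀ x ∈ Ioi (0:ℝ), |f x| ≤ C * B x) : IntegrableOn f (Ioi 0) := by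
  refine (hBint.const_mul C).mono' hmeas ?_
  rw [ae_restrict_iff' measurableSet_Ioi]
  exact ae_of_all _ fun x hx => by simpa [Real.norm_eq_abs] using hle x hx

section aux2
variable {W : ℝ → ℝ → ℝ} {α β : ℝ}

lemma ibp_main (hα : 0 ≤ α) (hβ : 0 < β)
    (hreg : ContDiffOn ℝ 4 (fun p : ℝ × ℝ => W p.1 p.2) (Qbar \ {(0, 0)}))
    (hpde : ∀ x t : ℝ, 0 ≤ x → 0 ≤ t → ¬(x = 0 ∧ t = 0) →
      DtW W x t = α * DxW W 2 x t - β * DxW W 4 x t)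
    (hbd : ∀ t : ℝ, 0 < t → W 0 t = 0 ∧ DxW W 1 0 t = 0)
    (hinf : ∀ t : ℝ, 0 < t →
      Tendsto (fun x => W x t) atTop (𝓝 0) ∧
      Tendsto (fun x => DxW W 1 x t) atTop (𝓝 0) ∧
      (∃ C : ℝ, ∀ x : ℝ, 1 ≤ x → |DxW W 2 x t| ≤ C) ∧
      (∃ C : ℝ, ∀ x : ℝ, 1 ≤ x → |DxW W 3 x t| ≤ C))
    {t : ℝ} (ht : 0 < t) {B : ℝ → ℝ} (hB0 : ∀ x, 0 ≤ B x)
    (hBint : IntegrableOn B (Ioi 0))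
    (hb : ∀ x : ℝ, 0 < x →
      (W x t) ^ 2 ≤ B x ∧ (DtW W x t) ^ 2 ≤ B x ∧
      (DxW W 1 x t) ^ 2 ≤ B x ∧ (DxW W 2 x t) ^ 2 ≤ B x ∧ (DxW W 3 x t) ^ 2 ≤ B x) :
    ∫ x in Ioi (0:ℝ), 2 * W x t * DtW W x t ≤ 0 := by
  set g : ℕ → ℝ → ℝ := fun k x => DxW W k x t with hgdef
  have hg0 : ∀ x, g 0 x = W x t := fun x => by
    simp [hgdef, DxW, iteratedDerivWithin_zero]
  -- measurability
  have hmeas : ∀ k, k ≤ 4 → AEStronglyMeasurable (g k) (volume.restrict (Ioi 0)) := fun k hk =>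
    ((contDxW hreg ht hk).mono Ioi_subset_Ici_self).aestronglyMeasurable measurableSet_Ioi
  have hDtmeas : AEStronglyMeasurable (fun x => DtW W x t) (volume.restrict (Ioi 0)) :=
    (contDtW hreg ht).aestronglyMeasurable measurableSet_Ioi
  -- pde rewrite for g4
  have hg4 : ∀ x : ℝ, 0 < x → g 4 x = (α * g 2 x - DtW W x t) / β := by
    intro x hx
    have := hpde x t hx.le ht.le (fun h => absurd h.1 hx.ne')
    field_simp [hgdef]
    linarith [this]
  -- basic product bounds
  have hprod : ∀ (j k : ℕ) (hj : ∀ x : ℝ, 0 < x → (g j x) ^ 2 ≤ B x)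
      (hk : ∀ x : ℝ, 0 < x → (g k x) ^ 2 ≤ B x), ∀ x ∈ Ioi (0:ℝ), |g j x * g k x| ≤ 1 * B x := by
    intro j k hj hk x hx
    calc |g j x * g k x| ≤ ((g j x) ^ 2 + (g k x) ^ 2) / 2 := abs_mul_le_half _ _
      _ ≤ 1 * B x := by linarith [hj x hx, hk x hx]
  have hb0 : ∀ x : ℝ, 0 < x → (g 0 x) ^ 2 ≤ B x := fun x hx => by
    rw [hg0]; exact (hb x hx).1
  have hb1 : ∀ x : ℝ, 0 < x → (g 1 x) ^ 2 ≤ B x := fun x hx => (hb x hx).2.2.1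
  have hb2 : ∀ x : ℝ, 0 < x → (g 2 x) ^ 2 ≤ B x := fun x hx => (hb x hx).2.2.2.1
  have hb3 : ∀ x : ℝ, 0 < x → (g 3 x) ^ 2 ≤ B x := fun x hx => (hb x hx).2.2.2.2
  have hb0t : ∀ x ∈ Ioi (0:ℝ), |g 0 x * DtW W x t| ≤ 1 * B x := by
    intro x hx
    calc |g 0 x * DtW W x t| ≤ ((g 0 x) ^ 2 + (DtW W x t) ^ 2) / 2 := abs_mul_le_half _ _
      _ ≤ 1 * B x := by linarith [hb0 x hx, (hb x hx).2.1]
  -- integrability of products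
  have i11 : IntegrableOn (fun x => g 1 x * g 1 x) (Ioi 0) :=
    integrable_of_le_B hBint ((hmeas 1 (by norm_num)).mul (hmeas 1 (by norm_num))) 1
      (hprod 1 1 hb1 hb1)
  have i02 : IntegrableOn (fun x => g 0 x * g 2 x) (Ioi 0) :=
    integrable_of_le_B hBint ((hmeas 0 (by norm_num)).mul (hmeas 2 (by norm_num))) 1
      (hprod 0 2 hb0 hb2)
  have i13 : IntegrableOn (fun x => g 1 x * g 3 x) (Ioi 0) :=
    integrable_of_le_B hBint ((hmeas 1 (by norm_num)).mul (hmeas 3 (by norm_num))) 1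
      (hprod 1 3 hb1 hb3)
  have i22 : IntegrableOn (fun x => g 2 x * g 2 x) (Ioi 0) :=
    integrable_of_le_B hBint ((hmeas 2 (by norm_num)).mul (hmeas 2 (by norm_num))) 1
      (hprod 2 2 hb2 hb2)
  have i04 : IntegrableOn (fun x => g 0 x * g 4 x) (Ioi 0) := by
    refine integrable_of_le_B hBint ((hmeas 0 (by norm_num)).mul (hmeas 4 le_rfl))
      ((α + 1) / β) ?_
    intro x hx
    have hx' : (0:ℝ) < x := hx
    have hnum : |g 0 x * (α * g 2 x - DtW W x t)| ≤ (α + 1) * B x := by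
      have hre : g 0 x * (α * g 2 x - DtW W x t)
          = α * (g 0 x * g 2 x) - g 0 x * DtW W x t := by ring
      rw [hre]
      calc |α * (g 0 x * g 2 x) - g 0 x * DtW W x t|
          ≤ |α * (g 0 x * g 2 x)| + |g 0 x * DtW W x t| := abs_sub _ _
        _ = α * |g 0 x * g 2 x| + |g 0 x * DtW W x t| := by
            rw [abs_mul, _root_.abs_of_nonneg hα]
        _ ≤ α * (1 * B x) + 1 * B x := by
            refine add_le_add ?_ (hb0t x hx)
            exact mul_le_mul_of_nonneg_left (hprod 0 2 hb0 hb2 x hx) hα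
        _ = (α + 1) * B x := by ring
    calc |g 0 x * g 4 x| = |g 0 x * (α * g 2 x - DtW W x t)| / β := by
          rw [hg4 x hx', ← mul_div_assoc, _root_.abs_div, _root_.abs_of_pos hβ]
      _ ≤ ((α + 1) * B x) / β := by gcongr
      _ = (α + 1) / β * B x := by ring
  -- boundary values
  obtain ⟨hW0, hDx0⟩ := hbd t ht
  have hg00 : g 0 0 = 0 := by rw [hg0]; exact hW0
  have hg10 : g 1 0 = 0 := hDx0
  -- continuity at 0 within Ici
  have hcw : ∀ k, k ≤ 4 → ContinuousWithinAt (g k) (Ici 0) 0 := fun k hk =>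
    (contDxW hreg ht hk) 0 self_mem_Ici
  -- derivatives
  have hD : ∀ k, k < 4 → ∀ x : ℝ, 0 < x → HasDerivAt (g k) (g (k+1) x) x := fun k hk x hx =>
    hasDerivDxW hreg ht hk hx
  -- tendsto facts
  obtain ⟨h0inf, h1inf', ⟨C2, hC2⟩, ⟨C3, hC3⟩⟩ := hinf t ht
  have h0inf' : Tendsto (g 0) atTop (𝓝 0) := by
    have : g 0 = fun x => W x t := funext hg0
    rw [this]; exact h0inf
  -- IBP 1
  have key1 : (∫ x in Ioi (0:ℝ), (g 1 x * g 1 x + g 0 x * g 2 x)) = 0 := by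
    have hft : Tendsto (fun x => g 0 x * g 1 x) atTop (𝓝 0) := by
      simpa using h0inf'.mul h1inf'
    have := integral_Ioi_of_hasDerivAt_of_tendsto
      (f := fun x => g 0 x * g 1 x) (f' := fun x => g 1 x * g 1 x + g 0 x * g 2 x)
      (a := 0) (m := 0)
      ((hcw 0 (by norm_num)).mul (hcw 1 (by norm_num)))
      (fun x hx => (hD 0 (by norm_num) x hx).mul (hD 1 (by norm_num) x hx))
      (i11.add i02) hft
    simpa [hg00, hg10] using this
  have e1 : (∫ x in Ioi (0:ℝ), g 0 x * g 2 x) = - ∫ x in Ioi (0:ℝ), g 1 x * g 1 x := by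
    rw [integral_add i11 i02] at key1
    linarith
  -- IBP 2
  have hbound2 : IsBoundedUnder (· ≤ ·) atTop ((fun y : ℝ => ‖y‖) ∘ g 2) := by
    refine ⟨C2, ?_⟩
    rw [eventually_map]
    filter_upwards [eventually_ge_atTop (1:ℝ)] with x hx
    simpa [Real.norm_eq_abs] using hC2 x hx
  have hbound3 : IsBoundedUnder (· ≤ ·) atTop ((fun y : ℝ => ‖y‖) ∘ g 3) := by
    refine ⟨C3, ?_⟩
    rw [eventually_map]
    filter_upwards [eventually_ge_atTop (1:ℝ)] with x hx
    simpa [Real.norm_eq_abs] using hC3 x hx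
  have t03 : Tendsto (fun x => g 0 x * g 3 x) atTop (𝓝 0) :=
    h0inf'.zero_mul_isBoundedUnder_le hbound3
  have t12 : Tendsto (fun x => g 1 x * g 2 x) atTop (𝓝 0) :=
    h1inf'.zero_mul_isBoundedUnder_le hbound2
  have hft2 : Tendsto (fun x => g 0 x * g 3 x - g 1 x * g 2 x) atTop (𝓝 0) := by
    simpa using t03.sub t12
  have key2 : (∫ x in Ioi (0:ℝ),
      ((g 1 x * g 3 x + g 0 x * g 4 x) - (g 2 x * g 2 x + g 1 x * g 3 x))) = 0 := by
    have hder : ∀ x ∈ Ioi (0:ℝ), HasDerivAt (fun y => g 0 y * g 3 y - g 1 y * g 2 y)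
        ((g 1 x * g 3 x + g 0 x * g 4 x) - (g 2 x * g 2 x + g 1 x * g 3 x)) x := fun x hx =>
      ((hD 0 (by norm_num) x hx).mul (hD 3 (by norm_num) x hx)).sub
        ((hD 1 (by norm_num) x hx).mul (hD 2 (by norm_num) x hx))
    have := integral_Ioi_of_hasDerivAt_of_tendsto
      (a := 0) (m := 0)
      (((hcw 0 (by norm_num)).mul (hcw 3 (by norm_num))).sub
        ((hcw 1 (by norm_num)).mul (hcw 2 (by norm_num))))
      hder ((i13.add i04).sub (i22.add i13)) hft2
    simpa [hg00, hg10] using this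
  have e2 : (∫ x in Ioi (0:ℝ), g 0 x * g 4 x) = ∫ x in Ioi (0:ℝ), g 2 x * g 2 x := by
    have iA : IntegrableOn (fun x => g 1 x * g 3 x + g 0 x * g 4 x) (Ioi 0) := i13.add i04
    have iB : IntegrableOn (fun x => g 2 x * g 2 x + g 1 x * g 3 x) (Ioi 0) := i22.add i13
    rw [integral_sub iA iB, integral_add i13 i04, integral_add i22 i13] at key2
    linarith
  -- conclusion
  have hfinal : (∫ x in Ioi (0:ℝ), 2 * W x t * DtW W x t)
      = (2*α) * (∫ x in Ioi (0:ℝ), g 0 x * g 2 x)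
        - (2*β) * (∫ x in Ioi (0:ℝ), g 0 x * g 4 x) := by
    have hcongr : EqOn (fun x => 2 * W x t * DtW W x t)
        (fun x => (2*α) * (g 0 x * g 2 x) - (2*β) * (g 0 x * g 4 x)) (Ioi 0) := by
      intro x hx
      have hx' : (0:ℝ) < x := hx
      have hp := hpde x t hx'.le ht.le (fun h => absurd h.1 hx'.ne')
      simp only
      rw [← hg0 x, hp]
      simp only [hgdef]
      ring
    rw [setIntegral_congr_fun measurableSet_Ioi hcongr,
      integral_sub (i02.const_mul _) (i04.const_mul _), integral_const_mul, integral_const_mul]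
  have hnn1 : 0 ≤ ∫ x in Ioi (0:ℝ), g 1 x * g 1 x :=
    setIntegral_nonneg measurableSet_Ioi (fun x _ => mul_self_nonneg _)
  have hnn2 : 0 ≤ ∫ x in Ioi (0:ℝ), g 2 x * g 2 x :=
    setIntegral_nonneg measurableSet_Ioi (fun x _ => mul_self_nonneg _)
  rw [hfinal, e1, e2]
  nlinarith

end aux2


set_option maxHeartbeats 1000000 in
/-- the uniqueness assertion of Theorem 7: a `C⁴` solution `W` of
`∂_t W = α∂_x²W - β∂_x⁴W` on `Q̄ ∖ {(0,0)}` with zero initial and boundary data, vanishing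
together with `∂_x W` at spatial infinity, with bounded second and third spatial derivatives
for `x ≥ 1`, and with squares of `W` and its derivatives dominated, uniformly in `0 < t ≤ T`,
by an integrable function of `x`, vanishes identically. -/
theorem stmt14 (α β : ℝ) (hα : 0 ≤ α) (hβ : 0 < β) (W : ℝ → ℝ → ℝ)
    (hreg : ContDiffOn ℝ 4 (fun p : ℝ × ℝ => W p.1 p.2) (Qbar \ {(0, 0)}))
    (hpde : ∀ x t : ℝ, 0 ≤ x → 0 ≤ t → ¬(x = 0 ∧ t = 0) →
      DtW W x t = α * DxW W 2 x t - β * DxW W 4 x t)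
    (hinit : ∀ x : ℝ, 0 < x → W x 0 = 0)
    (hbd : ∀ t : ℝ, 0 < t → W 0 t = 0 ∧ DxW W 1 0 t = 0)
    (hinf : ∀ t : ℝ, 0 < t →
      Tendsto (fun x => W x t) atTop (𝓝 0) ∧
      Tendsto (fun x => DxW W 1 x t) atTop (𝓝 0) ∧
      (∃ C : ℝ, ∀ x : ℝ, 1 ≤ x → |DxW W 2 x t| ≤ C) ∧
      (∃ C : ℝ, ∀ x : ℝ, 1 ≤ x → |DxW W 3 x t| ≤ C))
    (hdom : ∀ T : ℝ, 0 < T → ∃ B : ℝ → ℝ, (∀ x : ℝ, 0 ≤ B x) ∧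
      IntegrableOn B (Ioi 0) ∧
      ∀ x t : ℝ, 0 < x → 0 < t → t ≤ T →
        (W x t) ^ 2 ≤ B x ∧ (DtW W x t) ^ 2 ≤ B x ∧
        (DxW W 1 x t) ^ 2 ≤ B x ∧ (DxW W 2 x t) ^ 2 ≤ B x ∧ (DxW W 3 x t) ^ 2 ≤ B x) :
    ∀ x t : ℝ, 0 ≤ x → 0 ≤ t → ¬(x = 0 ∧ t = 0) → W x t = 0 := by
  have key : ∀ t₀ : ℝ, 0 < t₀ → ∀ x₀ : ℝ, 0 < x₀ → W x₀ t₀ = 0 := by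
    intro t₀ ht₀ x₀ hx₀
    obtain ⟨B, hB0, hBint, hBdom⟩ := hdom (t₀ + 1) (by linarith)
    set E : ℝ → ℝ := fun t => ∫ x in Ioi (0:ℝ), (W x t)^2 with hEdef
    have hWcont : ∀ τ : ℝ, 0 < τ → ContinuousOn (fun x => W x τ) (Ici 0) :=
      fun τ hτ => (sliceX hreg hτ).continuousOn
    have hmeasτ : ∀ τ : ℝ, 0 < τ →
        AEStronglyMeasurable (fun x => (W x τ)^2) (volume.restrict (Ioi 0)) := fun τ hτ =>
      (((hWcont τ hτ).mono Ioi_subset_Ici_self).pow 2).aestronglyMeasurable measurableSet_Ioi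
    have hintτ : ∀ τ : ℝ, 0 < τ → τ ≤ t₀ + 1 →
        IntegrableOn (fun x => (W x τ)^2) (Ioi 0) := by
      intro τ h1 h2
      refine hBint.mono' (hmeasτ τ h1) ?_
      rw [ae_restrict_iff' measurableSet_Ioi]
      refine ae_of_all _ fun x hx => ?_
      rw [Real.norm_eq_abs, _root_.abs_of_nonneg (sq_nonneg _)]
      exact (hBdom x τ hx h1 h2).1
    -- derivative of E
    have hE' : ∀ τ ∈ Ioo (0:ℝ) (t₀ + 1),
        HasDerivAt E (∫ x in Ioi (0:ℝ), 2 * W x τ * DtW W x τ) τ := by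
      rintro τ ⟨hτ0, hτT⟩
      have hε0 : 0 < min τ (t₀ + 1 - τ) := lt_min hτ0 (by linarith)
      have hball : ∀ s ∈ Metric.ball τ (min τ (t₀ + 1 - τ)), 0 < s ∧ s ≤ t₀ + 1 := by
        intro s hs
        rw [Metric.mem_ball, Real.dist_eq] at hs
        have h1 := _root_.abs_lt.1 hs
        have h2 := min_le_left τ (t₀ + 1 - τ)
        have h3 := min_le_right τ (t₀ + 1 - τ)
        constructor <;> linarith
      have hFmeas : ∀ᶠ s in 𝓝 τ,
          AEStronglyMeasurable (fun x => (W x s)^2) (volume.restrict (Ioi 0)) := by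
        filter_upwards [Metric.ball_mem_nhds τ hε0] with s hs
        exact hmeasτ s (hball s hs).1
      have hF'meas : AEStronglyMeasurable (fun x => 2 * W x τ * DtW W x τ)
          (volume.restrict (Ioi 0)) := by
        have h1 : ContinuousOn (fun x => 2 * W x τ * DtW W x τ) (Ioi 0) :=
          (continuousOn_const.mul ((hWcont τ hτ0).mono Ioi_subset_Ici_self)).mul
            (contDtW hreg hτ0)
        exact h1.aestronglyMeasurable measurableSet_Ioi
      have hbound : ∀ᵐ x ∂(volume.restrict (Ioi 0)),
          ∀ s ∈ Metric.ball τ (min τ (t₀ + 1 - τ)), ‖2 * W x s * DtW W x s‖ ≤ 2 * B x := by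
        rw [ae_restrict_iff' measurableSet_Ioi]
        refine ae_of_all _ fun x hx s hs => ?_
        obtain ⟨hs0, hsT⟩ := hball s hs
        have hd := hBdom x s hx hs0 hsT
        have h2 : 2 * W x s * DtW W x s = 2 * (W x s * DtW W x s) := by ring
        rw [Real.norm_eq_abs, h2, _root_.abs_mul, _root_.abs_two]
        have := abs_mul_le_half (W x s) (DtW W x s)
        nlinarith [hd.1, hd.2.1, abs_nonneg (W x s * DtW W x s)]
      have hdiff : ∀ᵐ x ∂(volume.restrict (Ioi 0)),
          ∀ s ∈ Metric.ball τ (min τ (t₀ + 1 - τ)),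
            HasDerivAt (fun s => (W x s)^2) (2 * W x s * DtW W x s) s := by
        rw [ae_restrict_iff' measurableSet_Ioi]
        refine ae_of_all _ fun x hx s hs => ?_
        have h := (hasDerivDtW hreg hx (hball s hs).1).fun_pow 2
        refine h.congr_deriv ?_
        push_cast
        ring
      exact (hasDerivAt_integral_of_dominated_loc_of_deriv_le
        (μ := volume.restrict (Ioi 0)) (F := fun s x => (W x s)^2)
        (F' := fun s x => 2 * W x s * DtW W x s) (x₀ := τ) (bound := fun x => 2 * B x)
        (Metric.ball_mem_nhds τ hε0) hFmeas (hintτ τ hτ0 hτT.le) hF'meas hbound (hBint.const_mul 2) hdiff).2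
    have hE'le : ∀ τ ∈ Ioo (0:ℝ) (t₀ + 1), deriv E τ ≤ 0 := by
      intro τ hτ
      rw [(hE' τ hτ).deriv]
      exact ibp_main hα hβ hreg hpde hbd hinf hτ.1 hB0 hBint
        (fun x hx => hBdom x τ hx hτ.1 hτ.2.le)
    have hEanti : AntitoneOn E (Ioo 0 (t₀ + 1)) := by
      apply antitoneOn_of_deriv_nonpos (convex_Ioo 0 (t₀ + 1))
      · exact fun τ hτ => ((hE' τ hτ).continuousAt).continuousWithinAt
      · rw [interior_Ioo]
        exact fun τ hτ => ((hE' τ hτ).differentiableAt).differentiableWithinAt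
      · rw [interior_Ioo]; exact hE'le
    -- limit at 0+
    have hne : (𝓝[Ioo (0:ℝ) t₀] 0).NeBot := by
      apply mem_closure_iff_nhdsWithin_neBot.mp
      rw [closure_Ioo ht₀.ne]
      exact left_mem_Icc.2 ht₀.le
    have hlim : Tendsto E (𝓝[Ioo (0:ℝ) t₀] 0) (𝓝 0) := by
      have := tendsto_integral_filter_of_dominated_convergence
        (μ := volume.restrict (Ioi 0)) (F := fun τ x => (W x τ)^2) (f := fun _ => (0:ℝ))
        (l := 𝓝[Ioo (0:ℝ) t₀] 0) B ?_ ?_ hBint ?_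
      · simpa using this
      · filter_upwards [self_mem_nhdsWithin] with τ hτ
        exact hmeasτ τ hτ.1
      · filter_upwards [self_mem_nhdsWithin] with τ hτ
        rw [ae_restrict_iff' measurableSet_Ioi]
        refine ae_of_all _ fun x hx => ?_
        rw [Real.norm_eq_abs, _root_.abs_of_nonneg (sq_nonneg _)]
        exact (hBdom x τ hx hτ.1 (by linarith [hτ.2])).1
      · rw [ae_restrict_iff' measurableSet_Ioi]
        refine ae_of_all _ fun x hx => ?_
        have hc : ContinuousWithinAt (fun s => W x s) (Ici 0) 0 :=
          (sliceT hreg hx).continuousOn 0 self_mem_Ici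
        have h1 : Tendsto (fun s => W x s) (𝓝[Ioo (0:ℝ) t₀] 0) (𝓝 (W x 0)) :=
          hc.tendsto.mono_left (nhdsWithin_mono 0 (fun s hs => le_of_lt hs.1))
        have h2 := h1.pow 2
        rw [hinit x hx] at h2
        simpa using h2
    have hEt0 : E t₀ ≤ 0 := by
      refine ge_of_tendsto hlim ?_
      filter_upwards [self_mem_nhdsWithin] with τ hτ
      exact hEanti ⟨hτ.1, by linarith [hτ.2]⟩ ⟨ht₀, by linarith⟩ hτ.2.le
    have hEeq : E t₀ = 0 := le_antisymm hEt0
      (setIntegral_nonneg measurableSet_Ioi fun x _ => sq_nonneg _)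
    have hae : ∀ᵐ x ∂(volume : Measure ℝ), x ∈ Ioi (0:ℝ) → (W x t₀)^2 = 0 := by
      have h := (integral_eq_zero_iff_of_nonneg (fun x => sq_nonneg (W x t₀))
        (hintτ t₀ ht₀ (by linarith))).1 hEeq
      rw [← ae_restrict_iff' measurableSet_Ioi]
      exact h.mono fun x hx => by simpa using hx
    by_contra hWne
    have hcont : ContinuousAt (fun x => (W x t₀)^2) x₀ :=
      ((hWcont t₀ ht₀).pow 2).continuousAt (Ici_mem_nhds hx₀)
    have hcpos : 0 < (W x₀ t₀)^2 :=
      lt_of_le_of_ne (sq_nonneg _) (Ne.symm (pow_ne_zero 2 hWne))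
    have hev : ∀ᶠ x in 𝓝 x₀, (W x₀ t₀)^2/2 < (W x t₀)^2 :=
      hcont.eventually (eventually_gt_nhds (by linarith))
    obtain ⟨δ, hδ0, hδ⟩ := Metric.eventually_nhds_iff.1 hev
    have hδ'0 : 0 < min δ x₀ := lt_min hδ0 hx₀
    have hsub : Ioo (x₀ - min δ x₀) (x₀ + min δ x₀) ⊆
        {x | ¬(x ∈ Ioi (0:ℝ) → (W x t₀)^2 = 0)} := by
      intro y hy
      have hy1 : 0 < y := by
        have := min_le_right δ x₀; obtain ⟨h1, h2⟩ := hy; linarith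
      have hy2 : dist y x₀ < δ := by
        rw [Real.dist_eq, _root_.abs_lt]
        have := min_le_left δ x₀; obtain ⟨h1, h2⟩ := hy
        constructor <;> linarith
      have := hδ hy2
      simp only [mem_setOf_eq, Classical.not_imp]
      exact ⟨hy1, by nlinarith⟩
    have hnull : volume {x | ¬(x ∈ Ioi (0:ℝ) → (W x t₀)^2 = 0)} = 0 := by
      rw [ae_iff] at hae; exact hae
    have hzero := measure_mono_null hsub hnull
    rw [Real.volume_Ioo] at hzero
    simp only [ENNReal.ofReal_eq_zero] at hzero
    linarith
  intro x t hx ht hne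
  rcases eq_or_lt_of_le ht with ht0 | htpos
  · have hx0 : x ≠ 0 := fun h => hne ⟨h, ht0.symm⟩
    rw [← ht0]
    exact hinit x (lt_of_le_of_ne hx (Ne.symm hx0))
  · rcases eq_or_lt_of_le hx with hx0 | hxpos
    · rw [← hx0]
      exact (hbd t htpos).1
    · exact key t htpos x hxpos
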